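/- For every n ∈ ℕ, the following identity of n(n+1) × n(n+1) integer matrices holds, where ⊗ denotes the Kronecker (tensor) product and M_A(n) = R(n) ⊗ R(n)ᵀ + L(n) ⊗ R(n)ᵀ + R(n) ⊗ L(n)ᵀ − L(n) ⊗ L(n)ᵀ: (B(n) ⊗ I_{n+1}) * M_A(n) * (I_{n+1} ⊗ B(n)ᵀ) = (I_n ⊗ B(n+1)ᵀ) * (R(n) ⊗ R(n)ᵀ − 2 · L(n) ⊗ L(n)ᵀ) * (B(n+1) ⊗ I_n). Since B(n) and B(n+1) are invertible over ℤ, consequently M_A(n) and R(n) ⊗ R(n)ᵀ − 2 · L(n) ⊗ L(n)ᵀ have isomorphic cokernels. -/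

import Mathlib

open Matrix
open scoped Kronecker

/-- The `n × n` lower-triangular binomial matrix, `B(n)ᵢⱼ = C(i, j)`. -/
def binomMat (n : ℕ) : Matrix (Fin n) (Fin n) ℤ :=
  Matrix.of fun i j => (Nat.choose (i : ℕ) (j : ℕ) : ℤ)

/-- The `n × (n+1)` matrix `L(n)`: the identity followed by a null column. -/
def Lmat (n : ℕ) : Matrix (Fin n) (Fin (n + 1)) ℤ :=
  Matrix.of fun i j => if (j : ℕ) = (i : ℕ) then 1 else 0

/-- The `n × (n+1)` matrix `R(n)`: a null column followed by the identity. -/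
def Rmat (n : ℕ) : Matrix (Fin n) (Fin (n + 1)) ℤ :=
  Matrix.of fun i j => if (j : ℕ) = (i : ℕ) + 1 then 1 else 0

/-- The Kasteleyn–Percus matrix of the Aztec diamond of order `n`:
`M_A(n) = R(n) ⊗ R(n)ᵀ + L(n) ⊗ R(n)ᵀ + R(n) ⊗ L(n)ᵀ - L(n) ⊗ L(n)ᵀ`. -/
def aztecMat (n : ℕ) : Matrix (Fin n × Fin (n + 1)) (Fin (n + 1) × Fin n) ℤ :=
  Rmat n ⊗ₖ (Rmat n)ᵀ + Lmat n ⊗ₖ (Rmat n)ᵀ + Rmat n ⊗ₖ (Lmat n)ᵀ - Lmat n ⊗ₖ (Lmat n)ᵀ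

/- ### Auxiliary lemmas -/

lemma binom_mul_L (n : ℕ) : binomMat n * Lmat n = Lmat n * binomMat (n + 1) := by
  ext i j
  simp only [mul_apply, binomMat, Lmat, of_apply]
  rw [Fin.sum_univ_eq_sum_range
      (fun k => (Nat.choose (i : ℕ) k : ℤ) * (if (j : ℕ) = k then 1 else 0)) n,
    Fin.sum_univ_eq_sum_range
      (fun k => (if (k : ℕ) = (i : ℕ) then (1 : ℤ) else 0) * (Nat.choose k (j : ℕ) : ℤ)) (n + 1)]
  simp only [mul_ite, ite_mul, mul_one, mul_zero, one_mul, zero_mul,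
    Finset.sum_ite_eq, Finset.sum_ite_eq', Finset.mem_range]
  have hi : (i : ℕ) < n + 1 := by omega
  rw [if_pos hi]
  split_ifs with h
  · rfl
  · have : (i : ℕ) < (j : ℕ) := by omega
    simp [Nat.choose_eq_zero_of_lt this]

lemma binom_mul_RL (n : ℕ) :
    binomMat n * (Rmat n + Lmat n) = Rmat n * binomMat (n + 1) := by
  ext i j
  simp only [mul_apply, Matrix.add_apply, binomMat, Rmat, Lmat, of_apply, mul_add]
  rw [Finset.sum_add_distrib]
  rw [Fin.sum_univ_eq_sum_range
      (fun k => (Nat.choose (i : ℕ) k : ℤ) * (if (j : ℕ) = k + 1 then 1 else 0)) n,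
    Fin.sum_univ_eq_sum_range
      (fun k => (Nat.choose (i : ℕ) k : ℤ) * (if (j : ℕ) = k then 1 else 0)) n,
    Fin.sum_univ_eq_sum_range
      (fun k => (if (k : ℕ) = (i : ℕ) + 1 then (1 : ℤ) else 0) * (Nat.choose k (j : ℕ) : ℤ))
      (n + 1)]
  simp only [mul_ite, ite_mul, mul_one, mul_zero, one_mul, zero_mul,
    Finset.sum_ite_eq', Finset.mem_range]
  have hi : (i : ℕ) + 1 < n + 1 := by omega
  rw [if_pos hi]
  obtain ⟨jv, hj⟩ := j
  rcases jv with _ | m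
  · simp only [Fin.val_mk]
    have h0 : ∀ k ∈ Finset.range n, (if 0 = k + 1 then ((Nat.choose (i : ℕ) k : ℤ)) else 0) = 0 :=
      fun k _ => by simp
    rw [Finset.sum_congr rfl h0]
    simp only [Finset.sum_const_zero, zero_add]
    rw [Finset.sum_ite_eq (Finset.range n) 0 (fun k => ((Nat.choose (i : ℕ) k : ℤ)))]
    have : (0 : ℕ) ∈ Finset.range n := Finset.mem_range.mpr (by omega)
    simp [this]
  · simp only [Fin.val_mk]
    have hcong : ∀ k ∈ Finset.range n,
        (if m + 1 = k + 1 then ((Nat.choose (i : ℕ) k : ℤ)) else 0) =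
        (if m = k then ((Nat.choose (i : ℕ) k : ℤ)) else 0) := by
      intro k _; simp
    rw [Finset.sum_congr rfl hcong,
      Finset.sum_ite_eq (Finset.range n) m (fun k => ((Nat.choose (i : ℕ) k : ℤ))),
      Finset.sum_ite_eq (Finset.range n) (m + 1) (fun k => ((Nat.choose (i : ℕ) k : ℤ)))]
    have hm : m ∈ Finset.range n := Finset.mem_range.mpr (by omega)
    rw [if_pos hm]
    have hpascal : ((i : ℕ) + 1).choose (m + 1) = (i : ℕ).choose m + (i : ℕ).choose (m + 1) :=
      Nat.choose_succ_succ _ _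
    split_ifs with h
    · push_cast [hpascal]; ring
    · rw [Finset.mem_range] at h
      have hlt : (i : ℕ) < m + 1 := by omega
      push_cast [hpascal, Nat.choose_eq_zero_of_lt hlt]
      ring

lemma binom_mul_R (n : ℕ) :
    binomMat n * Rmat n = Rmat n * binomMat (n + 1) - Lmat n * binomMat (n + 1) := by
  have h := binom_mul_RL n
  rw [Matrix.mul_add, binom_mul_L] at h
  exact eq_sub_of_add_eq h

lemma sub_kronecker {l m p q : Type*} (A B : Matrix l m ℤ) (C : Matrix p q ℤ) :
    (A - B) ⊗ₖ C = A ⊗ₖ C - B ⊗ₖ C := by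
  ext ⟨i, j⟩ ⟨k, l⟩
  simp [Matrix.kroneckerMap_apply, sub_mul]

lemma kronecker_sub {l m p q : Type*} (A : Matrix l m ℤ) (B C : Matrix p q ℤ) :
    A ⊗ₖ (B - C) = A ⊗ₖ B - A ⊗ₖ C := by
  ext ⟨i, j⟩ ⟨k, l⟩
  simp [Matrix.kroneckerMap_apply, mul_sub]

lemma det_binomMat (n : ℕ) : (binomMat n).det = 1 := by
  have h : (binomMat n).BlockTriangular OrderDual.toDual := by
    intro i j hij
    have : (i : ℕ) < (j : ℕ) := hij
    simp [binomMat, Nat.choose_eq_zero_of_lt this]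
  rw [Matrix.det_of_lowerTriangular _ h]
  simp [binomMat]

noncomputable def invBinom (n : ℕ) : Invertible (binomMat n) :=
  (binomMat n).invertibleOfIsUnitDet (by rw [det_binomMat]; exact isUnit_one)

noncomputable def invBinomT (n : ℕ) : Invertible (binomMat n)ᵀ :=
  (binomMat n)ᵀ.invertibleOfIsUnitDet (by rw [Matrix.det_transpose, det_binomMat]; exact isUnit_one)

noncomputable def invKron {m p : Type*} [Fintype m] [Fintype p] [DecidableEq m] [DecidableEq p]
    (A : Matrix m m ℤ) (B : Matrix p p ℤ) (hA : Invertible A) (hB : Invertible B) :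
    Invertible (A ⊗ₖ B) where
  invOf := ⅟A ⊗ₖ ⅟B
  invOf_mul_self := by rw [← Matrix.mul_kronecker_mul, invOf_mul_self, invOf_mul_self,
    Matrix.one_kronecker_one]
  mul_invOf_self := by rw [← Matrix.mul_kronecker_mul, mul_invOf_self, mul_invOf_self,
    Matrix.one_kronecker_one]

lemma coker_equiv_of_mul {k m : Type*} [Fintype k] [Fintype m] [DecidableEq k] [DecidableEq m]
    (P : Matrix k k ℤ) (Q : Matrix m m ℤ) (hP : Invertible P) (hQ : Invertible Q)
    (M : Matrix k m ℤ) :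
    Nonempty (((k → ℤ) ⧸ LinearMap.range M.mulVecLin) ≃ₗ[ℤ]
      ((k → ℤ) ⧸ LinearMap.range (P * M * Q).mulVecLin)) := by
  have hQtop : LinearMap.range Q.mulVecLin = ⊤ := by
    rw [LinearMap.range_eq_top]
    intro v
    exact ⟨(⅟Q).mulVec v, by
      simp [Matrix.mulVecLin_apply, Matrix.mulVec_mulVec, mul_invOf_self]⟩
  have hmap : (LinearMap.range M.mulVecLin).map
      ((P.toLinearEquiv' hP : (k → ℤ) ≃ₗ[ℤ] (k → ℤ)) : (k → ℤ) →ₗ[ℤ] (k → ℤ)) =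
      LinearMap.range (P * M * Q).mulVecLin := by
    rw [Matrix.mulVecLin_mul, Matrix.mulVecLin_mul,
      LinearMap.range_comp_of_range_eq_top _ hQtop, LinearMap.range_comp]
    congr 1
  exact ⟨Submodule.Quotient.equiv _ _ (P.toLinearEquiv' hP) hmap⟩

/-- **Diagonalizing the Aztec-diamond Kasteleyn–Percus matrix.**
`(B(n) ⊗ I) * M_A(n) * (I ⊗ B(n)ᵀ) = (I ⊗ B(n+1)ᵀ) * (R(n) ⊗ Rᵀ - 2 L ⊗ Lᵀ) *
(B(n+1) ⊗ I)`; since `B(n)` and `B(n+1)` are invertible over `ℤ`, consequently `M_A(n)`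
and `R(n) ⊗ R(n)ᵀ - 2 L(n) ⊗ L(n)ᵀ` have isomorphic cokernels. -/
theorem aztecMat_equiv (n : ℕ) :
    ((binomMat n ⊗ₖ (1 : Matrix (Fin (n + 1)) (Fin (n + 1)) ℤ)) * aztecMat n *
        ((1 : Matrix (Fin (n + 1)) (Fin (n + 1)) ℤ) ⊗ₖ (binomMat n)ᵀ) =
      ((1 : Matrix (Fin n) (Fin n) ℤ) ⊗ₖ (binomMat (n + 1))ᵀ) *
        (Rmat n ⊗ₖ (Rmat n)ᵀ - 2 • (Lmat n ⊗ₖ (Lmat n)ᵀ)) *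
        (binomMat (n + 1) ⊗ₖ (1 : Matrix (Fin n) (Fin n) ℤ))) ∧
    Nonempty (((Fin n × Fin (n + 1) → ℤ) ⧸ LinearMap.range (aztecMat n).mulVecLin) ≃ₗ[ℤ]
      ((Fin n × Fin (n + 1) → ℤ) ⧸
        LinearMap.range (Rmat n ⊗ₖ (Rmat n)ᵀ - 2 • (Lmat n ⊗ₖ (Lmat n)ᵀ)).mulVecLin)) := by
  have key :
      (binomMat n ⊗ₖ (1 : Matrix (Fin (n + 1)) (Fin (n + 1)) ℤ)) * aztecMat n *
        ((1 : Matrix (Fin (n + 1)) (Fin (n + 1)) ℤ) ⊗ₖ (binomMat n)ᵀ) =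
      ((1 : Matrix (Fin n) (Fin n) ℤ) ⊗ₖ (binomMat (n + 1))ᵀ) *
        (Rmat n ⊗ₖ (Rmat n)ᵀ - 2 • (Lmat n ⊗ₖ (Lmat n)ᵀ)) *
        (binomMat (n + 1) ⊗ₖ (1 : Matrix (Fin n) (Fin n) ℤ)) := by
    set B := binomMat n
    set B' := binomMat (n + 1)
    set L := Lmat n
    set R := Rmat n
    have lhs_eq :
        (B ⊗ₖ (1 : Matrix (Fin (n + 1)) (Fin (n + 1)) ℤ)) * aztecMat n *
          ((1 : Matrix (Fin (n + 1)) (Fin (n + 1)) ℤ) ⊗ₖ Bᵀ) =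
        (B * R) ⊗ₖ (B * R)ᵀ + (B * L) ⊗ₖ (B * R)ᵀ + (B * R) ⊗ₖ (B * L)ᵀ
          - (B * L) ⊗ₖ (B * L)ᵀ := by
      simp only [aztecMat, Matrix.mul_add, Matrix.mul_sub, Matrix.add_mul, Matrix.sub_mul,
        ← Matrix.mul_kronecker_mul, Matrix.one_mul, Matrix.mul_one, Matrix.transpose_mul]
      rfl
    have rhs_eq :
        ((1 : Matrix (Fin n) (Fin n) ℤ) ⊗ₖ B'ᵀ) *
          (R ⊗ₖ Rᵀ - 2 • (L ⊗ₖ Lᵀ)) * (B' ⊗ₖ (1 : Matrix (Fin n) (Fin n) ℤ)) =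
        (R * B') ⊗ₖ (R * B')ᵀ - 2 • ((L * B') ⊗ₖ (L * B')ᵀ) := by
      simp only [Matrix.mul_sub, Matrix.sub_mul, Matrix.mul_smul, Matrix.smul_mul,
        ← Matrix.mul_kronecker_mul, Matrix.one_mul, Matrix.mul_one, Matrix.transpose_mul]
    rw [lhs_eq, rhs_eq, binom_mul_R, binom_mul_L]
    simp only [sub_kronecker, kronecker_sub, Matrix.transpose_sub]
    abel
  refine ⟨key, ?_⟩
  have hP : Invertible (binomMat n ⊗ₖ (1 : Matrix (Fin (n + 1)) (Fin (n + 1)) ℤ)) :=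
    invKron _ _ (invBinom n) (invertibleOne)
  have hQ : Invertible ((1 : Matrix (Fin (n + 1)) (Fin (n + 1)) ℤ) ⊗ₖ (binomMat n)ᵀ) :=
    invKron _ _ invertibleOne (invBinomT n)
  have hP' : Invertible ((1 : Matrix (Fin n) (Fin n) ℤ) ⊗ₖ (binomMat (n + 1))ᵀ) :=
    invKron _ _ invertibleOne (invBinomT (n + 1))
  have hQ' : Invertible (binomMat (n + 1) ⊗ₖ (1 : Matrix (Fin n) (Fin n) ℤ)) :=
    invKron _ _ (invBinom (n + 1)) invertibleOne
  obtain ⟨e1⟩ := coker_equiv_of_mul _ _ hP hQ (aztecMat n)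
  obtain ⟨e2⟩ := coker_equiv_of_mul _ _ hP' hQ'
    (Rmat n ⊗ₖ (Rmat n)ᵀ - 2 • (Lmat n ⊗ₖ (Lmat n)ᵀ))
  rw [key] at e1
  exact ⟨e1.trans e2.symm⟩
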